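/- Let G be a finite undirected simple graph in which every vertex has positive degree, let S ⊆ V be nonempty, and let M := (D⁻¹A + I)/2. For every subset X ⊆ S with μ(X) ≥ μ(S)/2 and every integer t ≥ 0, π_X' (I_S M I_S)^t 1_X ≥ (1/200)·(1 − 3φ(S)/2)^t. (That is, the lazy random walk started at a vertex of X chosen with probability proportional to degree remains inside S and ends in X, never leaving S during the first t steps, with probability at least (1/200)(1 − 3φ(S)/2)^t.) -/

import Mathlib

open Matrix Finset

variable {V : Type*} [Fintype V] [DecidableEq V]

/-- Volume of a set of vertices: sum of degrees. -/
noncomputable def vol (G : SimpleGraph V) [DecidableRel G.Adj] (S : Finset V) : ℝ :=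
  ∑ v ∈ S, (G.degree v : ℝ)

/-- Number of edges leaving `S`. -/
noncomputable def cut (G : SimpleGraph V) [DecidableRel G.Adj] (S : Finset V) : ℝ :=
  ∑ u ∈ S, ∑ v ∈ Sᶜ, if G.Adj u v then (1 : ℝ) else 0

/-- Conductance of `S`. -/
noncomputable def conduct (G : SimpleGraph V) [DecidableRel G.Adj] (S : Finset V) : ℝ :=
  cut G S / vol G S

/-- Lazy random walk matrix `M = (D⁻¹ A + I)/2`. -/
noncomputable def lazy (G : SimpleGraph V) [DecidableRel G.Adj] : Matrix V V ℝ :=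
  (2 : ℝ)⁻¹ • (Matrix.diagonal (fun v => ((G.degree v : ℝ))⁻¹) * G.adjMatrix ℝ + 1)

/-- Diagonal 0/1 indicator matrix of `S`. -/
def indMat (S : Finset V) : Matrix V V ℝ :=
  Matrix.diagonal (fun v => if v ∈ S then (1 : ℝ) else 0)

/-- Indicator column vector of `S`. -/
def indVec (S : Finset V) : V → ℝ := fun v => if v ∈ S then (1 : ℝ) else 0

/-- The distribution `π_S` proportional to degrees on `S`. -/
noncomputable def piVec (G : SimpleGraph V) [DecidableRel G.Adj] (S : Finset V) : V → ℝ :=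
  fun v => if v ∈ S then (G.degree v : ℝ) / vol G S else 0


/- ### Auxiliary development ### -/

lemma diagonal_congr {f g : V → ℝ} (h : ∀ v, f v = g v) :
    Matrix.diagonal f = Matrix.diagonal g := by
  rw [funext h]

noncomputable def sqD (G : SimpleGraph V) [DecidableRel G.Adj] : Matrix V V ℝ :=
  Matrix.diagonal (fun v => Real.sqrt (G.degree v))

noncomputable def sqDi (G : SimpleGraph V) [DecidableRel G.Adj] : Matrix V V ℝ :=
  Matrix.diagonal (fun v => (Real.sqrt (G.degree v))⁻¹)

noncomputable def Kmat (G : SimpleGraph V) [DecidableRel G.Adj] : Matrix V V ℝ :=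
  (2 : ℝ)⁻¹ • (1 + sqDi G * G.adjMatrix ℝ * sqDi G)

noncomputable def Bmat (G : SimpleGraph V) [DecidableRel G.Adj] (S : Finset V) : Matrix V V ℝ :=
  indMat S * Kmat G * indMat S

noncomputable def yVec (G : SimpleGraph V) [DecidableRel G.Adj] (X : Finset V) : V → ℝ :=
  fun v => if v ∈ X then Real.sqrt (G.degree v) else 0

section basic
variable (G : SimpleGraph V) [DecidableRel G.Adj]
variable (hdeg : ∀ v : V, 0 < G.degree v)
include hdeg

lemma sqrt_deg_pos (v : V) : 0 < Real.sqrt (G.degree v) :=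
  Real.sqrt_pos.2 (by exact_mod_cast hdeg v)

lemma sqDi_mul_sqD : sqDi G * sqD G = 1 := by
  rw [sqDi, sqD, Matrix.diagonal_mul_diagonal,
    show (fun v => (Real.sqrt (G.degree v))⁻¹ * Real.sqrt (G.degree v)) = (fun _ : V => (1:ℝ))
      from funext fun v => inv_mul_cancel₀ (ne_of_gt (sqrt_deg_pos G hdeg v))]
  exact Matrix.diagonal_one

lemma sqD_mul_sqDi : sqD G * sqDi G = 1 := by
  rw [sqD, sqDi, Matrix.diagonal_mul_diagonal,
    show (fun v => Real.sqrt (G.degree v) * (Real.sqrt (G.degree v))⁻¹) = (fun _ : V => (1:ℝ))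
      from funext fun v => mul_inv_cancel₀ (ne_of_gt (sqrt_deg_pos G hdeg v))]
  exact Matrix.diagonal_one

lemma conjPow (B : Matrix V V ℝ) (t : ℕ) :
    (sqDi G * B * sqD G) ^ t = sqDi G * B ^ t * sqD G := by
  induction t with
  | zero => simp [sqDi_mul_sqD G hdeg]
  | succ n ih =>
      rw [pow_succ, pow_succ, ih]
      simp only [mul_assoc]
      rw [show sqD G * (sqDi G * (B * sqD G)) = B * sqD G by
        rw [← mul_assoc, sqD_mul_sqDi G hdeg, one_mul]]

end basic

section conj
variable (G : SimpleGraph V) [DecidableRel G.Adj]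
variable (hdeg : ∀ v : V, 0 < G.degree v)
include hdeg

lemma sqDi_mul_sqDi : sqDi G * sqDi G = Matrix.diagonal (fun v => ((G.degree v : ℝ))⁻¹) := by
  rw [sqDi, Matrix.diagonal_mul_diagonal]
  exact diagonal_congr fun v => by rw [← mul_inv, Real.mul_self_sqrt (by positivity)]

lemma lazy_conj (S : Finset V) :
    indMat S * lazy G * indMat S = sqDi G * Bmat G S * sqD G := by
  have hcom1 : sqDi G * indMat S = indMat S * sqDi G := by
    rw [sqDi, indMat, Matrix.diagonal_mul_diagonal, Matrix.diagonal_mul_diagonal]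
    exact diagonal_congr fun v => mul_comm _ _
  have hcom2 : indMat S * sqD G = sqD G * indMat S := by
    rw [sqD, indMat, Matrix.diagonal_mul_diagonal, Matrix.diagonal_mul_diagonal]
    exact diagonal_congr fun v => mul_comm _ _
  have hmid : sqDi G * Kmat G * sqD G = lazy G := by
    rw [Kmat, Matrix.mul_smul, Matrix.smul_mul, lazy]
    congr 1
    rw [mul_add, add_mul, mul_one, sqDi_mul_sqD G hdeg]
    rw [show sqDi G * (sqDi G * G.adjMatrix ℝ * sqDi G) * sqD G
        = (sqDi G * sqDi G) * G.adjMatrix ℝ * (sqDi G * sqD G) by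
      simp only [mul_assoc]]
    rw [sqDi_mul_sqD G hdeg, mul_one, sqDi_mul_sqDi G hdeg, add_comm]
  calc indMat S * lazy G * indMat S
      = indMat S * (sqDi G * Kmat G * sqD G) * indMat S := by rw [hmid]
    _ = (indMat S * sqDi G) * Kmat G * (sqD G * indMat S) := by simp only [mul_assoc]
    _ = (sqDi G * indMat S) * Kmat G * (indMat S * sqD G) := by rw [hcom1, hcom2]
    _ = sqDi G * Bmat G S * sqD G := by simp only [Bmat, mul_assoc]

lemma vol_pos {X : Finset V} (hX : X.Nonempty) : 0 < vol G X := by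
  rw [vol]
  apply Finset.sum_pos
  · intro v _
    exact_mod_cast hdeg v
  · exact hX

lemma main_reduce (S X : Finset V) (t : ℕ) :
    piVec G X ⬝ᵥ ((indMat S * lazy G * indMat S) ^ t).mulVec (indVec X)
      = (vol G X)⁻¹ * (yVec G X ⬝ᵥ ((Bmat G S) ^ t).mulVec (yVec G X)) := by
  rw [lazy_conj G hdeg S, conjPow G hdeg]
  have hy : sqD G *ᵥ indVec X = yVec G X := by
    funext v
    rw [sqD, Matrix.mulVec_diagonal]
    by_cases h : v ∈ X <;> simp [indVec, yVec, h]
  rw [show (sqDi G * Bmat G S ^ t * sqD G) *ᵥ indVec X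
      = sqDi G *ᵥ ((Bmat G S ^ t) *ᵥ (sqD G *ᵥ indVec X)) by
    simp only [← Matrix.mulVec_mulVec]]
  rw [hy]
  set z := (Bmat G S ^ t) *ᵥ yVec G X with hz
  rw [dotProduct, dotProduct, Finset.mul_sum]
  apply Finset.sum_congr rfl
  intro v _
  rw [sqDi, Matrix.mulVec_diagonal]
  by_cases h : v ∈ X
  · simp only [piVec, yVec, h, if_pos]
    have hdv : (0:ℝ) < Real.sqrt (G.degree v) := sqrt_deg_pos G hdeg v
    have hc : (G.degree v : ℝ) * (Real.sqrt (G.degree v))⁻¹ = Real.sqrt (G.degree v) := by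
      rw [inv_eq_one_div, mul_one_div, div_eq_iff (ne_of_gt hdv)]
      exact (Real.mul_self_sqrt (by positivity)).symm
    rw [div_eq_mul_inv]
    linear_combination (z v * (vol G X)⁻¹) * hc
  · simp [piVec, yVec, h]

end conj

section quad
variable (G : SimpleGraph V) [DecidableRel G.Adj]

lemma adj_row_sum (u : V) : ∑ v, (G.adjMatrix ℝ) u v = (G.degree u : ℝ) := by
  have := SimpleGraph.adjMatrix_mulVec_const_apply (α := ℝ) (G := G) (a := (1:ℝ)) (v := u)
  simpa [Matrix.mulVec, dotProduct] using this

lemma adj_entry_nonneg (u v : V) : 0 ≤ (G.adjMatrix ℝ) u v := by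
  rw [SimpleGraph.adjMatrix_apply]
  split <;> norm_num

lemma dot_diag (f : V → ℝ) (x y : V → ℝ) :
    x ⬝ᵥ (Matrix.diagonal f *ᵥ y) = (Matrix.diagonal f *ᵥ x) ⬝ᵥ y := by
  simp only [dotProduct, Matrix.mulVec_diagonal]
  exact Finset.sum_congr rfl fun v _ => by ring

lemma ind_dot_adj (X : Finset V) :
    indVec X ⬝ᵥ (G.adjMatrix ℝ *ᵥ indVec X) = vol G X - cut G X := by
  have h1 : ∀ u : V, (G.adjMatrix ℝ *ᵥ indVec X) u = ∑ v ∈ X, (G.adjMatrix ℝ) u v := by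
    intro u
    rw [Matrix.mulVec, dotProduct]
    simp only [indVec, mul_ite, mul_one, mul_zero]
    rw [Finset.sum_ite_mem, Finset.univ_inter]
  have h2 : indVec X ⬝ᵥ (G.adjMatrix ℝ *ᵥ indVec X)
      = ∑ u ∈ X, ∑ v ∈ X, (G.adjMatrix ℝ) u v := by
    rw [dotProduct]
    simp only [indVec, ite_mul, one_mul, zero_mul]
    rw [Finset.sum_ite_mem, Finset.univ_inter]
    exact Finset.sum_congr rfl fun u _ => h1 u
  rw [h2, vol, cut]
  rw [← Finset.sum_sub_distrib]
  apply Finset.sum_congr rfl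
  intro u _
  have h3 : ∑ v ∈ X, (G.adjMatrix ℝ) u v + ∑ v ∈ Xᶜ, (G.adjMatrix ℝ) u v
      = (G.degree u : ℝ) := by
    rw [Finset.sum_add_sum_compl]
    exact adj_row_sum G u
  have h4 : ∑ v ∈ Xᶜ, (G.adjMatrix ℝ) u v = ∑ v ∈ Xᶜ, if G.Adj u v then (1:ℝ) else 0 :=
    Finset.sum_congr rfl fun v _ => by simp [SimpleGraph.adjMatrix_apply]
  linarith [h3, h4]

lemma y_dot_y (X : Finset V) : yVec G X ⬝ᵥ yVec G X = vol G X := by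
  rw [dotProduct, vol]
  have h : ∀ v : V, yVec G X v * yVec G X v = if v ∈ X then (G.degree v : ℝ) else 0 := by
    intro v
    by_cases hv : v ∈ X <;> simp [yVec, hv, Real.mul_self_sqrt (Nat.cast_nonneg _)]
  simp only [h]
  rw [Finset.sum_ite_mem, Finset.univ_inter]

lemma indMat_mulVec_sub {X S : Finset V} (hXS : X ⊆ S) :
    indMat S *ᵥ yVec G X = yVec G X := by
  funext v
  rw [indMat, Matrix.mulVec_diagonal]
  by_cases h : v ∈ X
  · simp [yVec, h, hXS h]
  · simp [yVec, h]

lemma dot_K (x : V → ℝ) :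
    x ⬝ᵥ (Kmat G *ᵥ x)
      = 2⁻¹ * (x ⬝ᵥ x + (sqDi G *ᵥ x) ⬝ᵥ (G.adjMatrix ℝ *ᵥ (sqDi G *ᵥ x))) := by
  rw [Kmat, Matrix.smul_mulVec, dotProduct_smul, Matrix.add_mulVec, Matrix.one_mulVec,
    dotProduct_add]
  rw [show (sqDi G * G.adjMatrix ℝ * sqDi G) *ᵥ x
      = sqDi G *ᵥ (G.adjMatrix ℝ *ᵥ (sqDi G *ᵥ x)) by simp only [← Matrix.mulVec_mulVec]]
  rw [sqDi, dot_diag]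
  simp [smul_eq_mul, sqDi]

lemma sum_adj_sq_left (z : V → ℝ) (x : V → ℝ) (hzx : ∀ v, (G.degree v : ℝ) * (z v)^2 = (x v)^2) :
    ∑ u, ∑ v, (G.adjMatrix ℝ) u v * (z u)^2 = x ⬝ᵥ x := by
  rw [dotProduct]
  apply Finset.sum_congr rfl
  intro u _
  rw [← Finset.sum_mul, adj_row_sum G, ← pow_two, ← hzx u]

lemma sum_adj_sq_right (z : V → ℝ) (x : V → ℝ) (hzx : ∀ v, (G.degree v : ℝ) * (z v)^2 = (x v)^2) :
    ∑ u, ∑ v, (G.adjMatrix ℝ) u v * (z v)^2 = x ⬝ᵥ x := by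
  rw [Finset.sum_comm]
  rw [← sum_adj_sq_left G z x hzx]
  refine Finset.sum_congr rfl fun u _ => Finset.sum_congr rfl fun v _ => ?_
  by_cases h : G.Adj u v
  · simp [SimpleGraph.adjMatrix_apply, h, h.symm]
  · have h2 : ¬ G.Adj v u := fun hh => h hh.symm
    simp [SimpleGraph.adjMatrix_apply, h, h2]

lemma sum_adj_cross (z : V → ℝ) :
    ∑ u, ∑ v, (G.adjMatrix ℝ) u v * (z u * z v) = z ⬝ᵥ (G.adjMatrix ℝ *ᵥ z) := by
  rw [dotProduct]
  apply Finset.sum_congr rfl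
  intro u _
  rw [Matrix.mulVec, dotProduct, Finset.mul_sum]
  exact Finset.sum_congr rfl fun v _ => by ring

lemma herm_sqDi : (sqDi G)ᴴ = sqDi G := by
  rw [sqDi, Matrix.diagonal_conjTranspose]
  congr 1

lemma herm_indMat (S : Finset V) : (indMat S)ᴴ = indMat S := by
  rw [indMat, Matrix.diagonal_conjTranspose]
  congr 1

lemma hermAdj : (G.adjMatrix ℝ).IsHermitian := by
  rw [Matrix.IsHermitian, Matrix.conjTranspose_eq_transpose_of_trivial]
  exact SimpleGraph.transpose_adjMatrix G

lemma hermK : (Kmat G).IsHermitian := by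
  rw [Kmat, Matrix.IsHermitian, Matrix.conjTranspose_smul]
  rw [show (sqDi G * G.adjMatrix ℝ * sqDi G) = (sqDi G * G.adjMatrix ℝ * (sqDi G)ᴴ) by
    rw [herm_sqDi]]
  rw [Matrix.conjTranspose_add, Matrix.conjTranspose_one,
    (Matrix.isHermitian_mul_mul_conjTranspose (sqDi G) (hermAdj G)).eq, herm_sqDi]
  norm_num

lemma hermB (S : Finset V) : (Bmat G S).IsHermitian := by
  rw [Bmat, show (indMat S * Kmat G * indMat S) = (indMat S * Kmat G * (indMat S)ᴴ) by
    rw [herm_indMat]]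
  exact Matrix.isHermitian_mul_mul_conjTranspose (indMat S) (hermK G)

variable (hdeg : ∀ v : V, 0 < G.degree v)
include hdeg

lemma sqDi_mulVec_y (X : Finset V) : sqDi G *ᵥ yVec G X = indVec X := by
  funext v
  rw [sqDi, Matrix.mulVec_diagonal]
  by_cases h : v ∈ X
  · simp only [yVec, indVec, h, if_pos]
    exact inv_mul_cancel₀ (ne_of_gt (sqrt_deg_pos G hdeg v))
  · simp [yVec, indVec, h]

lemma quad_B {X S : Finset V} (hXS : X ⊆ S) :
    yVec G X ⬝ᵥ (Bmat G S *ᵥ yVec G X) = vol G X - cut G X / 2 := by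
  rw [Bmat]
  rw [show (indMat S * Kmat G * indMat S) *ᵥ yVec G X
      = indMat S *ᵥ (Kmat G *ᵥ (indMat S *ᵥ yVec G X)) by simp only [← Matrix.mulVec_mulVec]]
  rw [indMat_mulVec_sub G hXS, indMat, dot_diag, ← indMat, indMat_mulVec_sub G hXS]
  rw [dot_K G, sqDi_mulVec_y G hdeg, y_dot_y G, ind_dot_adj G]
  ring

lemma z_sq (x : V → ℝ) :
    ∀ v, (G.degree v : ℝ) * ((sqDi G *ᵥ x) v)^2 = (x v)^2 := by
  intro v
  rw [sqDi, Matrix.mulVec_diagonal]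
  have h : (Real.sqrt (G.degree v))^2 = (G.degree v : ℝ) := Real.sq_sqrt (by positivity)
  have hne : Real.sqrt (G.degree v) ≠ 0 := ne_of_gt (sqrt_deg_pos G hdeg v)
  rw [mul_pow, ← h]
  field_simp
  rw [Real.sqrt_sq (Real.sqrt_nonneg _)]

lemma quad_K_plus (x : V → ℝ) :
    4 * (x ⬝ᵥ (Kmat G *ᵥ x))
      = ∑ u, ∑ v, (G.adjMatrix ℝ) u v * ((sqDi G *ᵥ x) u + (sqDi G *ᵥ x) v)^2 := by
  set z := sqDi G *ᵥ x with hz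
  have expand : ∀ u v : V, (G.adjMatrix ℝ) u v * (z u + z v)^2
      = (G.adjMatrix ℝ) u v * (z u)^2 + 2*((G.adjMatrix ℝ) u v * (z u * z v))
        + (G.adjMatrix ℝ) u v * (z v)^2 := fun u v => by ring
  simp only [expand, Finset.sum_add_distrib]
  rw [sum_adj_sq_left G z x (z_sq G hdeg x), sum_adj_sq_right G z x (z_sq G hdeg x)]
  rw [show ∀ (f : V → V → ℝ), (∑ u, ∑ v, 2 * f u v) = 2 * ∑ u, ∑ v, f u v from
    fun f => by simp only [← Finset.mul_sum]]
  rw [sum_adj_cross G z, dot_K G x, ← hz]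
  ring

lemma quad_K_minus (x : V → ℝ) :
    4 * (x ⬝ᵥ x - x ⬝ᵥ (Kmat G *ᵥ x))
      = ∑ u, ∑ v, (G.adjMatrix ℝ) u v * ((sqDi G *ᵥ x) u - (sqDi G *ᵥ x) v)^2 := by
  set z := sqDi G *ᵥ x with hz
  have expand : ∀ u v : V, (G.adjMatrix ℝ) u v * (z u - z v)^2
      = (G.adjMatrix ℝ) u v * (z u)^2 - 2*((G.adjMatrix ℝ) u v * (z u * z v))
        + (G.adjMatrix ℝ) u v * (z v)^2 := fun u v => by ring
  simp only [expand, Finset.sum_add_distrib, Finset.sum_sub_distrib]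
  rw [sum_adj_sq_left G z x (z_sq G hdeg x), sum_adj_sq_right G z x (z_sq G hdeg x)]
  rw [show ∀ (f : V → V → ℝ), (∑ u, ∑ v, 2 * f u v) = 2 * ∑ u, ∑ v, f u v from
    fun f => by simp only [← Finset.mul_sum]]
  rw [sum_adj_cross G z, dot_K G x, ← hz]
  ring

lemma dsum_nonneg (z : V → ℝ) (f : V → V → ℝ) :
    0 ≤ ∑ u, ∑ v, (G.adjMatrix ℝ) u v * (f u v)^2 :=
  Finset.sum_nonneg fun u _ => Finset.sum_nonneg fun v _ =>
    mul_nonneg (adj_entry_nonneg G u v) (sq_nonneg _)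

lemma psdK : (Kmat G).PosSemidef := by
  refine Matrix.PosSemidef.of_dotProduct_mulVec_nonneg (hermK G) fun x => ?_
  have hx : star x = x := funext fun v => star_trivial _
  rw [hx]
  have h1 := quad_K_plus G hdeg x
  have h2 := dsum_nonneg G hdeg (sqDi G *ᵥ x) (fun u v => (sqDi G *ᵥ x) u + (sqDi G *ᵥ x) v)
  linarith

lemma K_quad_le (x : V → ℝ) : x ⬝ᵥ (Kmat G *ᵥ x) ≤ x ⬝ᵥ x := by
  have h1 := quad_K_minus G hdeg x
  have h2 := dsum_nonneg G hdeg (sqDi G *ᵥ x) (fun u v => (sqDi G *ᵥ x) u - (sqDi G *ᵥ x) v)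
  linarith

lemma psdB (S : Finset V) : (Bmat G S).PosSemidef := by
  have h := (psdK G hdeg).mul_mul_conjTranspose_same (indMat S)
  rw [herm_indMat] at h
  exact h

lemma quad_ind_le (S : Finset V) (x : V → ℝ) :
    (indMat S *ᵥ x) ⬝ᵥ (indMat S *ᵥ x) ≤ x ⬝ᵥ x := by
  rw [dotProduct, dotProduct]
  apply Finset.sum_le_sum
  intro v _
  rw [indMat, Matrix.mulVec_diagonal]
  by_cases h : v ∈ S
  · simp [h]
  · simp only [h, if_neg, not_false_iff, zero_mul]
    exact mul_self_nonneg _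

lemma psd1B (S : Finset V) : (1 - Bmat G S).PosSemidef := by
  refine Matrix.PosSemidef.of_dotProduct_mulVec_nonneg (Matrix.isHermitian_one.sub (hermB G S)) fun x => ?_
  have hx : star x = x := funext fun v => star_trivial _
  rw [hx, Matrix.sub_mulVec, dotProduct_sub, Matrix.one_mulVec]
  have hquad : x ⬝ᵥ (Bmat G S *ᵥ x) = (indMat S *ᵥ x) ⬝ᵥ (Kmat G *ᵥ (indMat S *ᵥ x)) := by
    rw [Bmat]
    rw [show (indMat S * Kmat G * indMat S) *ᵥ x
        = indMat S *ᵥ (Kmat G *ᵥ (indMat S *ᵥ x)) by simp only [← Matrix.mulVec_mulVec]]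
    rw [indMat, dot_diag, ← indMat]
  rw [hquad]
  have h1 := K_quad_le G hdeg (indMat S *ᵥ x)
  have h2 := quad_ind_le G hdeg S x
  simp only [sub_nonneg]
  linarith

end quad

section spectral
variable {B : Matrix V V ℝ} (hB : B.IsHermitian)

/-- The orthogonal matrix of eigenvectors, as a plain real matrix. -/
noncomputable def Umat {B : Matrix V V ℝ} (hB : B.IsHermitian) : Matrix V V ℝ :=
  (Matrix.IsHermitian.eigenvectorUnitary hB : Matrix V V ℝ)

/-- Coefficients of a vector in the eigenbasis. -/
noncomputable def coef {B : Matrix V V ℝ} (hB : B.IsHermitian) (y : V → ℝ) : V → ℝ :=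
  (Umat hB)ᵀ *ᵥ y

lemma U_mul_Ut : Umat hB * (Umat hB)ᵀ = 1 := by
  have h := (Matrix.mem_unitaryGroup_iff).mp (Matrix.IsHermitian.eigenvectorUnitary hB).2
  rwa [Matrix.star_eq_conjTranspose, Matrix.conjTranspose_eq_transpose_of_trivial] at h

lemma Ut_mul_U : (Umat hB)ᵀ * Umat hB = 1 := by
  have h := (Matrix.mem_unitaryGroup_iff').mp (Matrix.IsHermitian.eigenvectorUnitary hB).2
  rwa [Matrix.star_eq_conjTranspose, Matrix.conjTranspose_eq_transpose_of_trivial] at h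

lemma spectral' : B = Umat hB * Matrix.diagonal hB.eigenvalues * (Umat hB)ᵀ := by
  have h := hB.spectral_theorem
  rwa [RCLike.ofReal_real_eq_id, Function.id_comp, Unitary.conjStarAlgAut_apply, Matrix.star_eq_conjTranspose,
    Matrix.conjTranspose_eq_transpose_of_trivial] at h

lemma spectral_pow (t : ℕ) :
    B ^ t = Umat hB * Matrix.diagonal (fun i => hB.eigenvalues i ^ t) * (Umat hB)ᵀ := by
  induction t with
  | zero =>
      simp only [pow_zero]
      rw [show (Matrix.diagonal fun _ : V => (1:ℝ)) = 1 from Matrix.diagonal_one, mul_one,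
        U_mul_Ut hB]
  | succ n ih =>
      calc B ^ (n+1) = B ^ n * B := pow_succ _ _
        _ = (Umat hB * Matrix.diagonal (fun i => hB.eigenvalues i ^ n) * (Umat hB)ᵀ) *
            (Umat hB * Matrix.diagonal hB.eigenvalues * (Umat hB)ᵀ) := by
              rw [ih, ← spectral' hB]
        _ = Umat hB * Matrix.diagonal (fun i => hB.eigenvalues i ^ (n+1)) * (Umat hB)ᵀ := by
              simp only [mul_assoc]
              rw [show (Umat hB)ᵀ * (Umat hB * (Matrix.diagonal hB.eigenvalues * (Umat hB)ᵀ))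
                  = Matrix.diagonal hB.eigenvalues * (Umat hB)ᵀ by
                rw [← mul_assoc, Ut_mul_U hB, one_mul]]
              rw [show Matrix.diagonal (fun i => hB.eigenvalues i ^ n) *
                  (Matrix.diagonal hB.eigenvalues * (Umat hB)ᵀ)
                  = (Matrix.diagonal (fun i => hB.eigenvalues i ^ n) *
                    Matrix.diagonal hB.eigenvalues) * (Umat hB)ᵀ from (mul_assoc _ _ _).symm,
                Matrix.diagonal_mul_diagonal]
              rw [show (fun i => hB.eigenvalues i ^ n * hB.eigenvalues i)
                  = (fun i => hB.eigenvalues i ^ (n+1)) from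
                funext fun i => (pow_succ _ _).symm]

lemma dot_spectral (g : V → ℝ) (y z : V → ℝ) :
    y ⬝ᵥ ((Umat hB * Matrix.diagonal g * (Umat hB)ᵀ) *ᵥ z)
      = ∑ i, g i * (coef hB y i * coef hB z i) := by
  rw [show (Umat hB * Matrix.diagonal g * (Umat hB)ᵀ) *ᵥ z
      = Umat hB *ᵥ (Matrix.diagonal g *ᵥ ((Umat hB)ᵀ *ᵥ z)) by
    simp only [← Matrix.mulVec_mulVec]]
  rw [Matrix.dotProduct_mulVec, ← Matrix.mulVec_transpose]
  rw [dotProduct]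
  apply Finset.sum_congr rfl
  intro i _
  rw [Matrix.mulVec_diagonal, coef, coef]
  ring

lemma coef_orth (y z : V → ℝ) : ∑ i, coef hB y i * coef hB z i = y ⬝ᵥ z := by
  have h := dot_spectral hB (fun _ => 1) y z
  rw [Matrix.diagonal_one, mul_one, U_mul_Ut hB, Matrix.one_mulVec] at h
  simp only [one_mul] at h
  exact h.symm

lemma dot_pow (t : ℕ) (y : V → ℝ) :
    y ⬝ᵥ ((B ^ t) *ᵥ y) = ∑ i, (hB.eigenvalues i) ^ t * (coef hB y i)^2 := by
  rw [spectral_pow hB t, dot_spectral hB]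
  exact Finset.sum_congr rfl fun i _ => by ring

lemma coef_single (i : V) : coef hB (Umat hB *ᵥ Pi.single i 1) = Pi.single i 1 := by
  rw [coef, Matrix.mulVec_mulVec, Ut_mul_U hB, Matrix.one_mulVec]

lemma eig_nonneg (hp : B.PosSemidef) (i : V) : 0 ≤ hB.eigenvalues i := by
  have h := hp.dotProduct_mulVec_nonneg (Umat hB *ᵥ Pi.single i 1)
  rw [show star (Umat hB *ᵥ Pi.single i 1) = Umat hB *ᵥ Pi.single i 1 from
    funext fun v => star_trivial _] at h
  rw [show B *ᵥ (Umat hB *ᵥ Pi.single i 1) = (B ^ 1) *ᵥ (Umat hB *ᵥ Pi.single i 1) by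
    rw [pow_one]] at h
  rw [dot_pow hB, coef_single hB] at h
  rw [Finset.sum_eq_single i (fun j _ hj => by simp [Pi.single_apply, hj]) (by simp)] at h
  simpa using h

lemma eig_le_one (hp1 : (1 - B).PosSemidef) (i : V) : hB.eigenvalues i ≤ 1 := by
  have h := hp1.dotProduct_mulVec_nonneg (Umat hB *ᵥ Pi.single i 1)
  rw [show star (Umat hB *ᵥ Pi.single i 1) = Umat hB *ᵥ Pi.single i 1 from
    funext fun v => star_trivial _] at h
  rw [Matrix.sub_mulVec, dotProduct_sub, Matrix.one_mulVec] at h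
  have hbb : (Umat hB *ᵥ Pi.single i 1) ⬝ᵥ (B *ᵥ (Umat hB *ᵥ Pi.single i 1))
      = hB.eigenvalues i := by
    rw [show B *ᵥ (Umat hB *ᵥ Pi.single i 1) = (B ^ 1) *ᵥ (Umat hB *ᵥ Pi.single i 1) by
      rw [pow_one]]
    rw [dot_pow hB, coef_single hB]
    rw [Finset.sum_eq_single i (fun j _ hj => by simp [Pi.single_apply, hj]) (by simp)]
    simp
  have hyy : (Umat hB *ᵥ Pi.single i 1) ⬝ᵥ (Umat hB *ᵥ Pi.single i 1) = 1 := by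
    rw [← coef_orth hB, coef_single hB]
    rw [Finset.sum_eq_single i (fun j _ hj => by simp [Pi.single_apply, hj]) (by simp)]
    simp
  rw [hbb, hyy] at h
  linarith

end spectral


section more
variable (G : SimpleGraph V) [DecidableRel G.Adj]

lemma cut_nonneg (X : Finset V) : 0 ≤ cut G X :=
  Finset.sum_nonneg fun u _ => Finset.sum_nonneg fun v _ => by split <;> norm_num

lemma cut_le_vol (X : Finset V) : cut G X ≤ vol G X := by
  rw [cut, vol]
  apply Finset.sum_le_sum
  intro u _
  calc (∑ v ∈ Xᶜ, if G.Adj u v then (1:ℝ) else 0)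
      ≤ ∑ v, (if G.Adj u v then (1:ℝ) else 0) :=
        Finset.sum_le_sum_of_subset_of_nonneg (Finset.subset_univ _)
          (fun v _ _ => by split <;> norm_num)
    _ = (G.degree u : ℝ) := by
        have h := adj_row_sum G u
        simpa [SimpleGraph.adjMatrix_apply] using h

lemma vol_mono {X S : Finset V} (hXS : X ⊆ S) : vol G X ≤ vol G S :=
  Finset.sum_le_sum_of_subset_of_nonneg hXS fun v _ _ => by positivity

lemma vol_sdiff {X S : Finset V} (hXS : X ⊆ S) : vol G (S \ X) = vol G S - vol G X := by
  rw [vol, vol, vol, Finset.sum_sdiff_eq_sub hXS]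

lemma yVec_split {X S : Finset V} (hXS : X ⊆ S) :
    yVec G S = yVec G X + yVec G (S \ X) := by
  funext v
  simp only [yVec, Pi.add_apply, Finset.mem_sdiff]
  by_cases hX : v ∈ X
  · simp [hX, hXS hX]
  · by_cases hs : v ∈ S <;> simp [hX, hs]

end more

set_option maxHeartbeats 2000000 in
theorem stmt2 (G : SimpleGraph V) [DecidableRel G.Adj]
    (hdeg : ∀ v : V, 0 < G.degree v) (S : Finset V) (hS : S.Nonempty)
    (X : Finset V) (hXS : X ⊆ S) (hXvol : vol G S / 2 ≤ vol G X) (t : ℕ) :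
    piVec G X ⬝ᵥ ((indMat S * lazy G * indMat S) ^ t).mulVec (indVec X) ≥
      (1 / 200) * (1 - 3 * conduct G S / 2) ^ t := by
  have hB : (Bmat G S).IsHermitian := hermB G S
  have volS_pos : 0 < vol G S := vol_pos G hdeg hS
  have volX_pos : 0 < vol G X := lt_of_lt_of_le (by linarith) hXvol
  have volX_le : vol G X ≤ vol G S := vol_mono G hXS
  have hnn : ∀ i, 0 ≤ hB.eigenvalues i := fun i => eig_nonneg hB (psdB G hdeg S) i
  have hle1 : ∀ i, hB.eigenvalues i ≤ 1 := fun i => eig_le_one hB (psd1B G hdeg S) i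
  rw [ge_iff_le, main_reduce G hdeg S X t, dot_pow hB t]
  set φ := conduct G S with hφdef
  set lam := hB.eigenvalues with hlam
  set c := coef hB (yVec G X) with hc
  set a := coef hB (yVec G S) with ha
  set b := coef hB (yVec G (S \ X)) with hb
  have hsplit : ∀ i, a i = c i + b i := by
    intro i
    rw [ha, hb, hc, coef, coef, coef, yVec_split G hXS, Matrix.mulVec_add]
    simp
  have hcc : ∑ i, (c i)^2 = vol G X := by
    have h := coef_orth hB (yVec G X) (yVec G X)
    rw [y_dot_y] at h
    rw [← h, hc]
    exact Finset.sum_congr rfl fun i _ => (pow_two _)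
  have haa : ∑ i, (a i)^2 = vol G S := by
    have h := coef_orth hB (yVec G S) (yVec G S)
    rw [y_dot_y] at h
    rw [← h, ha]
    exact Finset.sum_congr rfl fun i _ => (pow_two _)
  have hbb : ∑ i, (b i)^2 = vol G S - vol G X := by
    have h := coef_orth hB (yVec G (S \ X)) (yVec G (S \ X))
    rw [y_dot_y, vol_sdiff G hXS] at h
    rw [← h, hb]
    exact Finset.sum_congr rfl fun i _ => (pow_two _)
  have hcl : ∑ i, lam i * (c i)^2 = vol G X - cut G X / 2 := by
    have h := dot_pow hB 1 (yVec G X)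
    rw [pow_one, quad_B G hdeg hXS] at h
    rw [hlam, hc, h]
    exact Finset.sum_congr rfl fun i _ => by rw [pow_one]
  have hal : ∑ i, lam i * (a i)^2 = vol G S - cut G S / 2 := by
    have h := dot_pow hB 1 (yVec G S)
    rw [pow_one, quad_B G hdeg (subset_refl S)] at h
    rw [hlam, ha, h]
    exact Finset.sum_congr rfl fun i _ => by rw [pow_one]
  have hφ_nonneg : 0 ≤ φ := div_nonneg (cut_nonneg G S) volS_pos.le
  have hφ_le_one : φ ≤ 1 := by
    rw [hφdef, conduct, div_le_one volS_pos]
    exact cut_le_vol G S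
  have hcut : cut G S = φ * vol G S := by
    rw [hφdef, conduct]
    field_simp
  have hQnn : 0 ≤ ∑ i, lam i ^ t * (c i)^2 :=
    Finset.sum_nonneg fun i _ => mul_nonneg (pow_nonneg (hnn i) t) (sq_nonneg _)
  clear_value lam c a b φ
  rcases le_or_gt (1/3 : ℝ) φ with hcase | hcase
  · -- easy case : φ ≥ 1/3, use Jensen
    have hjen : ((vol G X)⁻¹ * (vol G X - cut G X / 2)) ^ t
        ≤ (vol G X)⁻¹ * ∑ i, lam i ^ t * (c i)^2 := by
      have hconv : ConvexOn ℝ (Set.Ici 0) (fun x : ℝ => x ^ t) := convexOn_pow t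
      have h1 : 0 < ∑ i, (c i)^2 := by rw [hcc]; exact volX_pos
      have hj := hconv.map_centerMass_le (t := Finset.univ) (w := fun i => (c i)^2)
        (p := lam) (fun i _ => sq_nonneg _) h1 (fun i _ => hnn i)
      rw [Finset.centerMass, Finset.centerMass, hcc] at hj
      simp only [smul_eq_mul, Function.comp] at hj
      have e1 : ∑ i, (c i)^2 * lam i = vol G X - cut G X/2 := by
        rw [← hcl]
        exact Finset.sum_congr rfl fun i _ => mul_comm _ _
      have e2 : ∑ i, (c i)^2 * lam i ^ t = ∑ i, lam i ^t * (c i)^2 :=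
        Finset.sum_congr rfl fun i _ => mul_comm _ _
      rw [e1, e2] at hj
      exact hj
    have hm_half : (1/2:ℝ) ≤ (vol G X)⁻¹ * (vol G X - cut G X/2) := by
      rw [inv_mul_eq_div, le_div_iff₀ volX_pos]
      linarith [cut_le_vol G X]
    have hm_t : (1/2:ℝ)^t ≤ ((vol G X)⁻¹ * (vol G X - cut G X/2))^t :=
      pow_le_pow_left₀ (by norm_num) hm_half t
    have habs : (1 - 3*φ/2)^t ≤ (1/2:ℝ)^t := by
      have h1 : |1 - 3*φ/2| ≤ 1/2 := abs_le.2 ⟨by linarith, by linarith⟩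
      calc (1 - 3*φ/2)^t ≤ |(1 - 3*φ/2)^t| := le_abs_self _
        _ = |1 - 3*φ/2|^t := abs_pow _ _
        _ ≤ (1/2:ℝ)^t := pow_le_pow_left₀ (abs_nonneg _) h1 t
    have hhalf_nn : (0:ℝ) ≤ (1/2:ℝ)^t := by positivity
    nlinarith [hjen, hm_t, habs, hhalf_nn]
  · -- main case : φ < 1/3, spectral projection argument
    set θ := 1 - 3 * φ / 2 with hθ
    have hθhalf : 1/2 < θ := by rw [hθ]; linarith
    have hθ0 : (0:ℝ) ≤ θ := le_trans (by norm_num) hθhalf.le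
    set T := Finset.univ.filter (fun i => θ ≤ lam i) with hT
    set α := ∑ i ∈ T, (a i)^2 with hα
    set β := ∑ i ∈ T, (b i)^2 with hβ
    set β' := ∑ i ∈ Finset.univ.filter (fun i => ¬ θ ≤ lam i), (a i)^2 with hβ'
    clear_value θ T α β β'
    have hα0 : 0 ≤ α := by
      rw [hα]; exact Finset.sum_nonneg fun i _ => sq_nonneg _
    have hβ0 : 0 ≤ β := by
      rw [hβ]; exact Finset.sum_nonneg fun i _ => sq_nonneg _
    have hsum_split : α + β' = vol G S := by
      rw [hα, hβ', hT, Finset.sum_filter_add_sum_filter_not]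
      exact haa
    have hslack : ∑ i, (a i)^2 * (1 - lam i) = cut G S / 2 := by
      have hterm : ∀ i : V, (a i)^2 * (1 - lam i) = (a i)^2 - lam i * (a i)^2 :=
        fun i => by ring
      simp only [hterm]
      rw [Finset.sum_sub_distrib, haa, hal]
      ring
    have hup : ∑ i ∈ Finset.univ.filter (fun i => ¬ θ ≤ lam i), (a i)^2 * (1 - lam i)
        ≤ cut G S / 2 := by
      rw [← hslack]
      exact Finset.sum_le_sum_of_subset_of_nonneg (Finset.filter_subset _ _)
        (fun i _ _ => mul_nonneg (sq_nonneg _) (by linarith [hle1 i]))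
    have hlow : (3 * φ / 2) * β' ≤
        ∑ i ∈ Finset.univ.filter (fun i => ¬ θ ≤ lam i), (a i)^2 * (1 - lam i) := by
      rw [hβ', Finset.mul_sum]
      apply Finset.sum_le_sum
      intro i hi
      have hi' : lam i < θ := by
        have := (Finset.mem_filter.1 hi).2
        exact lt_of_not_ge this
      have h2 : 3 * φ / 2 ≤ 1 - lam i := by rw [hθ] at hi'; linarith
      calc 3 * φ / 2 * (a i)^2 = (a i)^2 * (3 * φ / 2) := mul_comm _ _
        _ ≤ (a i)^2 * (1 - lam i) := mul_le_mul_of_nonneg_left h2 (sq_nonneg _)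
    have hβ'_le : β' ≤ vol G S / 3 := by
      rcases eq_or_lt_of_le hφ_nonneg with h0 | hpos
      · -- φ = 0
        have hcut0 : cut G S = 0 := by rw [hcut, ← h0]; ring
        have hsum0 : ∑ i ∈ Finset.univ.filter (fun i => ¬ θ ≤ lam i),
            (a i)^2 * (1 - lam i) = 0 := by
          have hge : 0 ≤ ∑ i ∈ Finset.univ.filter (fun i => ¬ θ ≤ lam i),
              (a i)^2 * (1 - lam i) :=
            Finset.sum_nonneg fun i _ => mul_nonneg (sq_nonneg _) (by linarith [hle1 i])
          rw [hcut0] at hup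
          linarith
        have hzero : ∀ i ∈ Finset.univ.filter (fun i => ¬ θ ≤ lam i), (a i)^2 = 0 := by
          intro i hi
          have h1 := (Finset.sum_eq_zero_iff_of_nonneg
            (fun i _ => mul_nonneg (sq_nonneg _) (by linarith [hle1 i]))).1 hsum0 i hi
          have hi' : lam i < θ := lt_of_not_ge ((Finset.mem_filter.1 hi).2)
          have hpos' : 0 < 1 - lam i := by
            rw [hθ, ← h0] at hi'
            linarith
          have := mul_eq_zero.1 h1
          rcases this with h | h
          · exact h
          · linarith
        have : β' = 0 := by
          rw [hβ']
          exact Finset.sum_eq_zero hzero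
        rw [this]
        positivity
      · by_contra hcon
        push_neg at hcon
        have h1 : (3 * φ / 2) * β' ≤ φ * vol G S / 2 := by
          rw [← hcut] at *
          linarith [hlow, hup]
        nlinarith [h1, hpos, hcon]
    have hα_ge : 2/3 * vol G S ≤ α := by linarith
    have hβ_le : β ≤ vol G S / 2 := by
      have h1 : β ≤ ∑ i, (b i)^2 := by
        rw [hβ]
        exact Finset.sum_le_sum_of_subset_of_nonneg (Finset.subset_univ _)
          (fun i _ _ => sq_nonneg _)
      rw [hbb] at h1
      linarith
    -- Cauchy–Schwarz on T
    have hcs : ∑ i ∈ T, a i * b i ≤ Real.sqrt α * Real.sqrt β := by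
      have h := Finset.sum_mul_sq_le_sq_mul_sq T a b
      calc ∑ i ∈ T, a i * b i ≤ |∑ i ∈ T, a i * b i| := le_abs_self _
        _ = Real.sqrt ((∑ i ∈ T, a i * b i)^2) := (Real.sqrt_sq_eq_abs _).symm
        _ ≤ Real.sqrt (α * β) := Real.sqrt_le_sqrt (by rw [hα, hβ]; exact h)
        _ = Real.sqrt α * Real.sqrt β := Real.sqrt_mul hα0 _
    have hexp : ∑ i ∈ T, (c i)^2 = α - 2*(∑ i ∈ T, a i * b i) + β := by
      have hterm : ∀ i ∈ T, (c i)^2 = (a i)^2 - 2*(a i * b i) + (b i)^2 := by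
        intro i _
        have h := hsplit i
        have hci : c i = a i - b i := by linarith
        rw [hci]; ring
      have h1 : ∑ i ∈ T, (c i)^2 = ∑ i ∈ T, ((a i)^2 - 2*(a i * b i) + (b i)^2) :=
        Finset.sum_congr rfl hterm
      rw [h1, Finset.sum_add_distrib, Finset.sum_sub_distrib, ← Finset.mul_sum, ← hα, ← hβ]
    have hsq : (Real.sqrt α - Real.sqrt β)^2 ≤ ∑ i ∈ T, (c i)^2 := by
      rw [hexp]
      have hsa := Real.sq_sqrt hα0
      have hsb := Real.sq_sqrt hβ0
      nlinarith [hcs]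
    have hkey : Real.sqrt (vol G S/200) ≤ Real.sqrt α - Real.sqrt β := by
      have h1 : Real.sqrt (2/3 * vol G S) ≤ Real.sqrt α := Real.sqrt_le_sqrt hα_ge
      have h2 : Real.sqrt β ≤ Real.sqrt (vol G S/2) := Real.sqrt_le_sqrt hβ_le
      have h3 : Real.sqrt (vol G S/2) + Real.sqrt (vol G S/200)
          ≤ Real.sqrt (2/3 * vol G S) := by
        have hpq : Real.sqrt (vol G S/2) * Real.sqrt (vol G S/200) = vol G S / 20 := by
          rw [← Real.sqrt_mul (by positivity)]
          rw [show vol G S/2 * (vol G S/200) = (vol G S/20)^2 by ring]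
          exact Real.sqrt_sq (by positivity)
        have hA := Real.sq_sqrt (show (0:ℝ) ≤ vol G S/2 by positivity)
        have hB2 := Real.sq_sqrt (show (0:ℝ) ≤ vol G S/200 by positivity)
        have hC := Real.sq_sqrt (show (0:ℝ) ≤ 2/3 * vol G S by positivity)
        have hsum_sq : (Real.sqrt (vol G S/2) + Real.sqrt (vol G S/200))^2
            ≤ (Real.sqrt (2/3 * vol G S))^2 := by nlinarith [volS_pos]
        calc Real.sqrt (vol G S/2) + Real.sqrt (vol G S/200)
            = Real.sqrt ((Real.sqrt (vol G S/2) + Real.sqrt (vol G S/200))^2) :=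
              (Real.sqrt_sq (by positivity)).symm
          _ ≤ Real.sqrt ((Real.sqrt (2/3 * vol G S))^2) := Real.sqrt_le_sqrt hsum_sq
          _ = Real.sqrt (2/3 * vol G S) := Real.sqrt_sq (Real.sqrt_nonneg _)
      linarith
    have hTc : vol G S / 200 ≤ ∑ i ∈ T, (c i)^2 := by
      have h0 : 0 ≤ Real.sqrt (vol G S/200) := Real.sqrt_nonneg _
      have h1 : (Real.sqrt (vol G S/200))^2 ≤ (Real.sqrt α - Real.sqrt β)^2 :=
        pow_le_pow_left₀ h0 hkey 2
      rw [Real.sq_sqrt (show (0:ℝ) ≤ vol G S/200 by positivity)] at h1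
      linarith
    have hQ1 : θ^t * (vol G S/200) ≤ ∑ i, lam i ^ t * (c i)^2 := by
      calc θ^t * (vol G S/200) ≤ θ^t * ∑ i ∈ T, (c i)^2 :=
            mul_le_mul_of_nonneg_left hTc (pow_nonneg hθ0 t)
        _ = ∑ i ∈ T, θ^t * (c i)^2 := Finset.mul_sum _ _ _
        _ ≤ ∑ i ∈ T, lam i ^ t * (c i)^2 := by
            apply Finset.sum_le_sum
            intro i hi
            have hθlam : θ ≤ lam i := by
              have := (Finset.mem_filter.1 (by rwa [hT] at hi)).2
              exact this
            exact mul_le_mul_of_nonneg_right (pow_le_pow_left₀ hθ0 hθlam t) (sq_nonneg _)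
        _ ≤ ∑ i, lam i ^ t * (c i)^2 :=
            Finset.sum_le_sum_of_subset_of_nonneg (Finset.subset_univ _)
              (fun i _ _ => mul_nonneg (pow_nonneg (hnn i) t) (sq_nonneg _))
    calc (1:ℝ)/200 * θ^t = (vol G S)⁻¹ * (θ^t * (vol G S/200)) := by
          field_simp
      _ ≤ (vol G S)⁻¹ * ∑ i, lam i ^ t * (c i)^2 :=
          mul_le_mul_of_nonneg_left hQ1 (by positivity)
      _ ≤ (vol G X)⁻¹ * ∑ i, lam i ^ t * (c i)^2 := by
          apply mul_le_mul_of_nonneg_right _ hQnn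
          exact inv_anti₀ volX_pos volX_le
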